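/- Let K = Q(√D) with D squarefree, D ≡ 2, 3 (mod 4), and let G be an integral Z-valued binary generalized quadratic form over K with associated quaternary quadratic form Q having Gram matrix M_Q. Then det(M_Q)/D² is an integer congruent to 0 or 1 modulo 4; in fact det(M_Q)/D² ≡ (N(b) + N(e) + df)² (mod 4), where a, b, c, e ∈ O_K and d, f ∈ Z are the coefficients of G. -/

import Mathlib

open Matrix

private lemma det_four {R : Type*} [CommRing R] (A : Matrix (Fin 4) (Fin 4) R) :
    A.det = A 0 0 * A 1 1 * A 2 2 * A 3 3 - A 0 0 * A 1 1 * A 2 3 * A 3 2 - A 0 0 * A 1 2 * A 2 1 * A 3 3 + A 0 0 * A 1 2 * A 2 3 * A 3 1 + A 0 0 * A 1 3 * A 2 1 * A 3 2 - A 0 0 * A 1 3 * A 2 2 * A 3 1 - A 0 1 * A 1 0 * A 2 2 * A 3 3 + A 0 1 * A 1 0 * A 2 3 * A 3 2 + A 0 1 * A 1 2 * A 2 0 * A 3 3 - A 0 1 * A 1 2 * A 2 3 * A 3 0 - A 0 1 * A 1 3 * A 2 0 * A 3 2 + A 0 1 * A 1 3 * A 2 2 * A 3 0 + A 0 2 *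 A 1 0 * A 2 1 * A 3 3 - A 0 2 * A 1 0 * A 2 3 * A 3 1 - A 0 2 * A 1 1 * A 2 0 * A 3 3 + A 0 2 * A 1 1 * A 2 3 * A 3 0 + A 0 2 * A 1 3 * A 2 0 * A 3 1 - A 0 2 * A 1 3 * A 2 1 * A 3 0 - A 0 3 * A 1 0 * A 2 1 * A 3 2 + A 0 3 * A 1 0 * A 2 2 * A 3 1 + A 0 3 * A 1 1 * A 2 0 * A 3 2 - A 0 3 * A 1 1 * A 2 2 * A 3 0 - A 0 3 * A 1 2 * A 2 0 * A 3 1 + A 0 3 * A 1 2 * A 2 1 * A 3 0 := by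
  rw [Matrix.det_succ_row_zero]
  simp [Fin.sum_univ_succ, Matrix.det_fin_three,
    show (Fin.succ 2 : Fin 4) = 3 from rfl, show (Fin.castSucc 2 : Fin 4) = 2 from rfl,
    show ((1 : Fin 4).succAbove 2 : Fin 4) = 3 from rfl,
    show ((2 : Fin 4).succAbove 2 : Fin 4) = 3 from rfl,
    show ((3 : Fin 4).succAbove 2 : Fin 4) = 2 from rfl]
  ring

set_option maxHeartbeats 4000000

/-- Let D ≡ 2,3 (mod 4) be squarefree and G an integral ℤ-valued binary generalized
quadratic form over K = ℚ(√D) with coefficients a, b, c, e ∈ O_K and d, f ∈ ℤ. Then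
det(M_Q)/D² is an integer congruent to 0 or 1 mod 4; in fact
det(M_Q)/D² ≡ (N(b) + N(e) + df)² (mod 4). -/
theorem stmt_17 (D : ℤ) (hsq : Squarefree D) (hD0 : D ≠ 0) (hD1 : D ≠ 1)
    (hD4 : D % 4 = 2 ∨ D % 4 = 3)
    (K : Type*) [Field K] [Algebra ℚ K] (sd : K) (hsd : sd ^ 2 = (D : K))
    (hgen : ∀ x : K, ∃ a b : ℚ, x = algebraMap ℚ K a + algebraMap ℚ K b * sd)
    (τ : K →ₐ[ℚ] K) (hτ : τ sd = -sd)
    (a b c e : K) (d f : ℤ)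
    (ha : a ∈ integralClosure ℤ K) (hb : b ∈ integralClosure ℤ K)
    (hc : c ∈ integralClosure ℤ K) (he : e ∈ integralClosure ℤ K)
    (MG T MQ : Matrix (Fin 4) (Fin 4) K)
    (hMG : MG = !![a, b / 2, (d : K) / 2, e / 2;
                   b / 2, c, τ e / 2, (f : K) / 2;
                   (d : K) / 2, τ e / 2, τ a, τ b / 2;
                   e / 2, (f : K) / 2, τ b / 2, τ c])
    (hT : T = !![1, sd, 0, 0;
                 0, 0, 1, sd;
                 1, -sd, 0, 0;
                 0, 0, 1, -sd])
    (hMQ : MQ = Tᵀ * MG * T) :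
    ∃ m t : ℤ, MQ.det = (D : K) ^ 2 * (m : K) ∧
      (t : K) = b * τ b + e * τ e + ((d * f : ℤ) : K) ∧
      m % 4 = t ^ 2 % 4 ∧ (m % 4 = 0 ∨ m % 4 = 1) := by
  have hinj : Function.Injective (algebraMap ℚ K) := (algebraMap ℚ K).injective
  -- every integral element has integer coordinates in the basis 1, sd
  have key : ∀ x : K, x ∈ integralClosure ℤ K → ∃ p q : ℤ, x = (p : K) + (q : K) * sd := by
    intro x hx
    have hxi : IsIntegral ℤ x := hx
    obtain ⟨p, q, hpq⟩ := hgen x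
    have hτx : τ x = algebraMap ℚ K p - algebraMap ℚ K q * sd := by
      rw [hpq]
      simp only [_root_.map_add, _root_.map_mul, hτ, AlgHom.commutes]
      ring
    have hτint : IsIntegral ℤ (τ x) := hxi.map (τ.restrictScalars ℤ)
    have htr : x + τ x = algebraMap ℚ K (p + p) := by
      rw [hτx, hpq, _root_.map_add]; ring
    have h2p : IsIntegral ℤ ((p + p : ℚ)) := by
      have h := hxi.add hτint
      rw [htr] at h
      exact (isIntegral_algebraMap_iff hinj).mp h
    obtain ⟨u, hu⟩ := IsIntegrallyClosed.isIntegral_iff.mp h2p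
    have hu : (u : ℚ) = p + p := by rwa [eq_intCast (algebraMap ℤ ℚ)] at hu
    have hnormx : x * τ x = algebraMap ℚ K (p ^ 2 - (D : ℚ) * q ^ 2) := by
      rw [hτx, hpq]
      simp only [_root_.map_sub, _root_.map_pow, _root_.map_mul, map_intCast]
      linear_combination (-(algebraMap ℚ K q) ^ 2) * hsd
    have hnint : IsIntegral ℤ ((p ^ 2 - (D : ℚ) * q ^ 2 : ℚ)) := by
      have h := hxi.mul hτint
      rw [hnormx] at h
      exact (isIntegral_algebraMap_iff hinj).mp h
    obtain ⟨n, hn⟩ := IsIntegrallyClosed.isIntegral_iff.mp hnint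
    have hn : (n : ℚ) = p ^ 2 - (D : ℚ) * q ^ 2 := by rwa [eq_intCast (algebraMap ℤ ℚ)] at hn
    -- D * (2q)^2 is an integer
    have hDr : ((2 * q : ℚ)) ^ 2 = ((u ^ 2 - 4 * n : ℤ) : ℚ) / ((D : ℤ) : ℚ) := by
      have hDQ : ((D : ℤ) : ℚ) ≠ 0 := Int.cast_ne_zero.mpr hD0
      rw [eq_div_iff hDQ]
      push_cast
      linear_combination (-(u : ℚ) - p - p) * hu + 4 * hn
    have hden : (((2 * q : ℚ)) ^ 2).den = ((2 * q : ℚ)).den ^ 2 := Rat.den_pow _ _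
    have hdvd : (((2 * q : ℚ)).den : ℤ) * (((2 * q : ℚ)).den : ℤ) ∣ D := by
      have h1 : ((((u ^ 2 - 4 * n : ℤ) : ℚ) / ((D : ℤ) : ℚ)).den : ℤ) ∣ D := by
        have := Rat.den_dvd (u ^ 2 - 4 * n) D
        rwa [Rat.divInt_eq_div] at this
      rw [← hDr, hden] at h1
      calc (((2 * q : ℚ)).den : ℤ) * (((2 * q : ℚ)).den : ℤ)
          = ((((2 * q : ℚ)).den ^ 2 : ℕ) : ℤ) := by push_cast; ring
        _ ∣ D := h1
    have hden1 : ((2 * q : ℚ)).den = 1 := by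
      have := hsq _ hdvd
      rcases Int.isUnit_iff.mp this with h | h
      · exact_mod_cast h
      · exfalso
        have : (0 : ℤ) < (((2 * q : ℚ)).den : ℤ) := Int.natCast_pos.mpr ((2 * q : ℚ)).pos
        omega
    obtain ⟨v, hv⟩ : ∃ v : ℤ, (v : ℚ) = 2 * q :=
      ⟨((2 * q : ℚ)).num, (Rat.den_eq_one_iff _).mp hden1⟩
    -- the integer relation
    have heq : u ^ 2 - D * v ^ 2 = 4 * n := by
      have : ((u ^ 2 - D * v ^ 2 : ℤ) : ℚ) = ((4 * n : ℤ) : ℚ) := by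
        push_cast
        linear_combination ((u : ℚ) + p + p) * hu - (D : ℚ) * ((v : ℚ) + 2 * q) * hv - 4 * hn
      exact_mod_cast this
    -- both u and v are even
    rcases Int.even_or_odd u with ⟨k, hk⟩ | ⟨k, hk⟩ <;>
      rcases Int.even_or_odd v with ⟨l, hl⟩ | ⟨l, hl⟩
    · -- both even: done
      refine ⟨k, l, ?_⟩
      have hp : p = (k : ℚ) := by
        have : ((k : ℚ) + k) = p + p := by rw [← hu, hk]; push_cast; ring
        linarith
      have hq : q = (l : ℚ) := by
        have : ((l : ℚ) + l) = 2 * q := by rw [← hv, hl]; push_cast; ring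
        linarith
      rw [hpq, hp, hq]
      norm_num [map_intCast]
    · exfalso
      have h4 : (4 : ℤ) ∣ D := ⟨k * k - n - D * l ^ 2 - D * l, by subst hk hl; linear_combination -heq⟩
      omega
    · exfalso
      have h4 : (4 : ℤ) ∣ 1 := ⟨n - k * k - k + D * l * l, by subst hk hl; linear_combination heq⟩
      omega
    · exfalso
      have h4 : (4 : ℤ) ∣ D - 1 := ⟨k ^ 2 + k - n - D * l ^ 2 - D * l, by subst hk hl; linear_combination -heq⟩
      omega
  obtain ⟨A1, A2, hA⟩ := key a ha
  obtain ⟨B1, B2, hB⟩ := key b hb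
  obtain ⟨C1, C2, hC⟩ := key c hc
  obtain ⟨E1, E2, hE⟩ := key e he
  have hτint : ∀ (P1 P2 : ℤ), τ ((P1 : K) + (P2 : K) * sd) = (P1 : K) - (P2 : K) * sd := by
    intro P1 P2
    simp only [_root_.map_add, _root_.map_mul, map_intCast, hτ]
    ring
  have hτa : τ a = (A1 : K) - (A2 : K) * sd := by rw [hA]; exact hτint A1 A2
  have hτb : τ b = (B1 : K) - (B2 : K) * sd := by rw [hB]; exact hτint B1 B2
  have hτc : τ c = (C1 : K) - (C2 : K) * sd := by rw [hC]; exact hτint C1 C2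
  have hτe : τ e = (E1 : K) - (E2 : K) * sd := by rw [hE]; exact hτint E1 E2
  refine ⟨(B1 ^ 2 - D * B2 ^ 2 + E1 ^ 2 - D * E2 ^ 2 + d * f) ^ 2 + 4 * (1*E2^2*d*f*D + (-1)*E1^2*d*f + 1*C2^2*d^2*D + (-1)*C1^2*d^2 + (-2)*B2*C2*E1*d*D + (-2)*B2*C1*E2*d*D + 1*B2^2*d*f*D + (-1)*B2^2*E2^2*D^2 + 1*B2^2*E1^2*D + 2*B1*C2*E2*d*D + 2*B1*C1*E1*d + (-1)*B1^2*d*f + 1*B1^2*E2^2*D + (-1)*B1^2*E1^2 + 2*A2*C2*E2^2*D^2 + 2*A2*C2*E1^2*D + 4*A2*C1*E1*E2*D + (-2)*A2*B2*E1*f*D + (-2)*A2*B2^2*C2*D^2 + (-2)*A2*B1*E2*f*D + 4*A2*B1*B2*C1*D + (-2)*A2*B1^2*C2*D + 1*A2^2*f^2*D + 4*A2^2*C2^2*D^2 + (-4)*A2^2*C1^2*D + (-4)*A1*C2*E1*E2*D + (-2)*A1*C1*E2^2*D + (-2)*A1*C1*E1^2 + 2*A1*B2*E2*f*D + (-2)*A1*B2^2*C1*D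 + 2*A1*B1*E1*f + 4*A1*B1*B2*C2*D + (-2)*A1*B1^2*C1 + (-1)*A1^2*f^2 + (-4)*A1^2*C2^2*D + 4*A1^2*C1^2),
    B1 ^ 2 - D * B2 ^ 2 + E1 ^ 2 - D * E2 ^ 2 + d * f, ?_, ?_, ?_, ?_⟩
  · -- determinant computation
    have hdT : T.det = -4 * (D : K) := by
      rw [hT, det_four]
      simp only [Matrix.cons_val', Matrix.cons_val_zero, Matrix.cons_val_one, Matrix.head_cons,
        Matrix.empty_val', Matrix.cons_val_fin_one, Matrix.cons_val_two, Matrix.tail_cons,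
        Matrix.cons_val_three, Matrix.head_fin_const, Matrix.of_apply]
      linear_combination (-4 : K) * hsd
    have key16 : (16 : K) * MG.det =
        (((B1 ^ 2 - D * B2 ^ 2 + E1 ^ 2 - D * E2 ^ 2 + d * f) ^ 2 + 4 * (1*E2^2*d*f*D + (-1)*E1^2*d*f + 1*C2^2*d^2*D + (-1)*C1^2*d^2 + (-2)*B2*C2*E1*d*D + (-2)*B2*C1*E2*d*D + 1*B2^2*d*f*D + (-1)*B2^2*E2^2*D^2 + 1*B2^2*E1^2*D + 2*B1*C2*E2*d*D + 2*B1*C1*E1*d + (-1)*B1^2*d*f + 1*B1^2*E2^2*D + (-1)*B1^2*E1^2 + 2*A2*C2*E2^2*D^2 + 2*A2*C2*E1^2*D + 4*A2*C1*E1*E2*D + (-2)*A2*B2*E1*f*D + (-2)*A2*B2^2*C2*D^2 + (-2)*A2*B1*E2*f*D + 4*A2*B1*B2*C1*D + (-2)*A2*B1^2*C2*D + 1*A2^2*f^2*D + 4*A2^2*C2^2*D^2 + (-4)*A2^2*C1^2*D + (-4)*A1*C2*E1*E2*D + (-2)*A1*C1*E2^2*D + (-2)*A1*C1*E1^2 +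 2*A1*B2*E2*f*D + (-2)*A1*B2^2*C1*D + 2*A1*B1*E1*f + 4*A1*B1*B2*C2*D + (-2)*A1*B1^2*C1 + (-1)*A1^2*f^2 + (-4)*A1^2*C2^2*D + 4*A1^2*C1^2) : ℤ) : K) := by
      rw [hMG, hτa, hτb, hτc, hτe, hA, hB, hC, hE, det_four]
      simp only [Matrix.cons_val', Matrix.cons_val_zero, Matrix.cons_val_one, Matrix.head_cons,
        Matrix.empty_val', Matrix.cons_val_fin_one, Matrix.cons_val_two, Matrix.tail_cons,
        Matrix.cons_val_three, Matrix.head_fin_const, Matrix.of_apply]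
      push_cast
      have hK : CharZero K := charZero_of_injective_algebraMap hinj
      have hu : (2 : K) * (2 : K)⁻¹ = 1 := mul_inv_cancel₀ two_ne_zero
      linear_combination (1*(d:K)^2*(f:K)^2 + 2*(d:K)^2*(f:K)^2*(2:K)⁻¹ + 4*(d:K)^2*(f:K)^2*(2:K)⁻¹^2 + 8*(d:K)^2*(f:K)^2*(2:K)⁻¹^3 + 2*(E2:K)^2*(d:K)*(f:K)*sd^2 + 4*(E2:K)^2*(d:K)*(f:K)*sd^2*(2:K)⁻¹ + 8*(E2:K)^2*(d:K)*(f:K)*sd^2*(2:K)⁻¹^2 + 16*(E2:K)^2*(d:K)*(f:K)*sd^2*(2:K)⁻¹^3 + 1*(E2:K)^4*sd^4 + 2*(E2:K)^4*sd^4*(2:K)⁻¹ + 4*(E2:K)^4*sd^4*(2:K)⁻¹^2 + 8*(E2:K)^4*sd^4*(2:K)⁻¹^3 + (-2)*(E1:K)^2*(d:K)*(f:K) + (-4)*(E1:K)^2*(d:K)*(f:K)*(2:K)⁻¹ + (-8)*(E1:K)^2*(d:K)*(f:K)*(2:K)⁻¹^2 + (-16)*(E1:K)^2*(d:K)*(f:K)*(2:K)⁻¹^3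 + (-2)*(E1:K)^2*(E2:K)^2*sd^2 + (-4)*(E1:K)^2*(E2:K)^2*sd^2*(2:K)⁻¹ + (-8)*(E1:K)^2*(E2:K)^2*sd^2*(2:K)⁻¹^2 + (-16)*(E1:K)^2*(E2:K)^2*sd^2*(2:K)⁻¹^3 + 1*(E1:K)^4 + 2*(E1:K)^4*(2:K)⁻¹ + 4*(E1:K)^4*(2:K)⁻¹^2 + 8*(E1:K)^4*(2:K)⁻¹^3 + 4*(C2:K)^2*(d:K)^2*sd^2 + 8*(C2:K)^2*(d:K)^2*sd^2*(2:K)⁻¹ + (-4)*(C1:K)^2*(d:K)^2 + (-8)*(C1:K)^2*(d:K)^2*(2:K)⁻¹ + (-8)*(B2:K)*(C2:K)*(E1:K)*(d:K)*sd^2 + (-16)*(B2:K)*(C2:K)*(E1:K)*(d:K)*sd^2*(2:K)⁻¹ + (-32)*(B2:K)*(C2:K)*(E1:K)*(d:K)*sd^2*(2:K)⁻¹^2 + (-8)*(B2:K)*(C1:K)*(E2:K)*(d:K)*sd^2 + (-16)*(B2:K)*(C1:K)*(E2:K)*(d:K)*sd^2*(2:K)⁻¹ + (-32)*(B2:K)*(C1:K)*(E2:K)*(d:K)*sd^2*(2:K)⁻¹^2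 + 2*(B2:K)^2*(d:K)*(f:K)*sd^2 + 4*(B2:K)^2*(d:K)*(f:K)*sd^2*(2:K)⁻¹ + 8*(B2:K)^2*(d:K)*(f:K)*sd^2*(2:K)⁻¹^2 + 16*(B2:K)^2*(d:K)*(f:K)*sd^2*(2:K)⁻¹^3 + (-2)*(B2:K)^2*(E2:K)^2*sd^4 + (-4)*(B2:K)^2*(E2:K)^2*sd^4*(2:K)⁻¹ + (-8)*(B2:K)^2*(E2:K)^2*sd^4*(2:K)⁻¹^2 + (-16)*(B2:K)^2*(E2:K)^2*sd^4*(2:K)⁻¹^3 + 2*(B2:K)^2*(E1:K)^2*sd^2 + 4*(B2:K)^2*(E1:K)^2*sd^2*(2:K)⁻¹ + 8*(B2:K)^2*(E1:K)^2*sd^2*(2:K)⁻¹^2 + 16*(B2:K)^2*(E1:K)^2*sd^2*(2:K)⁻¹^3 + 1*(B2:K)^4*sd^4 + 2*(B2:K)^4*sd^4*(2:K)⁻¹ + 4*(B2:K)^4*sd^4*(2:K)⁻¹^2 + 8*(B2:K)^4*sd^4*(2:K)⁻¹^3 + 8*(B1:K)*(C2:K)*(E2:K)*(d:K)*sd^2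 + 16*(B1:K)*(C2:K)*(E2:K)*(d:K)*sd^2*(2:K)⁻¹ + 32*(B1:K)*(C2:K)*(E2:K)*(d:K)*sd^2*(2:K)⁻¹^2 + 8*(B1:K)*(C1:K)*(E1:K)*(d:K) + 16*(B1:K)*(C1:K)*(E1:K)*(d:K)*(2:K)⁻¹ + 32*(B1:K)*(C1:K)*(E1:K)*(d:K)*(2:K)⁻¹^2 + (-2)*(B1:K)^2*(d:K)*(f:K) + (-4)*(B1:K)^2*(d:K)*(f:K)*(2:K)⁻¹ + (-8)*(B1:K)^2*(d:K)*(f:K)*(2:K)⁻¹^2 + (-16)*(B1:K)^2*(d:K)*(f:K)*(2:K)⁻¹^3 + 2*(B1:K)^2*(E2:K)^2*sd^2 + 4*(B1:K)^2*(E2:K)^2*sd^2*(2:K)⁻¹ + 8*(B1:K)^2*(E2:K)^2*sd^2*(2:K)⁻¹^2 + 16*(B1:K)^2*(E2:K)^2*sd^2*(2:K)⁻¹^3 + (-2)*(B1:K)^2*(E1:K)^2 + (-4)*(B1:K)^2*(E1:K)^2*(2:K)⁻¹ + (-8)*(B1:K)^2*(E1:K)^2*(2:K)⁻¹^2 + (-16)*(B1:K)^2*(E1:K)^2*(2:K)⁻¹^3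 + (-2)*(B1:K)^2*(B2:K)^2*sd^2 + (-4)*(B1:K)^2*(B2:K)^2*sd^2*(2:K)⁻¹ + (-8)*(B1:K)^2*(B2:K)^2*sd^2*(2:K)⁻¹^2 + (-16)*(B1:K)^2*(B2:K)^2*sd^2*(2:K)⁻¹^3 + 1*(B1:K)^4 + 2*(B1:K)^4*(2:K)⁻¹ + 4*(B1:K)^4*(2:K)⁻¹^2 + 8*(B1:K)^4*(2:K)⁻¹^3 + 8*(A2:K)*(C2:K)*(E2:K)^2*sd^4 + 16*(A2:K)*(C2:K)*(E2:K)^2*sd^4*(2:K)⁻¹ + 8*(A2:K)*(C2:K)*(E1:K)^2*sd^2 + 16*(A2:K)*(C2:K)*(E1:K)^2*sd^2*(2:K)⁻¹ + 16*(A2:K)*(C1:K)*(E1:K)*(E2:K)*sd^2 + 32*(A2:K)*(C1:K)*(E1:K)*(E2:K)*sd^2*(2:K)⁻¹ + (-8)*(A2:K)*(B2:K)*(E1:K)*(f:K)*sd^2 + (-16)*(A2:K)*(B2:K)*(E1:K)*(f:K)*sd^2*(2:K)⁻¹ + (-32)*(A2:K)*(B2:K)*(E1:K)*(f:K)*sd^2*(2:K)⁻¹^2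 + (-8)*(A2:K)*(B2:K)^2*(C2:K)*sd^4 + (-16)*(A2:K)*(B2:K)^2*(C2:K)*sd^4*(2:K)⁻¹ + (-8)*(A2:K)*(B1:K)*(E2:K)*(f:K)*sd^2 + (-16)*(A2:K)*(B1:K)*(E2:K)*(f:K)*sd^2*(2:K)⁻¹ + (-32)*(A2:K)*(B1:K)*(E2:K)*(f:K)*sd^2*(2:K)⁻¹^2 + 16*(A2:K)*(B1:K)*(B2:K)*(C1:K)*sd^2 + 32*(A2:K)*(B1:K)*(B2:K)*(C1:K)*sd^2*(2:K)⁻¹ + (-8)*(A2:K)*(B1:K)^2*(C2:K)*sd^2 + (-16)*(A2:K)*(B1:K)^2*(C2:K)*sd^2*(2:K)⁻¹ + 4*(A2:K)^2*(f:K)^2*sd^2 + 8*(A2:K)^2*(f:K)^2*sd^2*(2:K)⁻¹ + (-16)*(A1:K)*(C2:K)*(E1:K)*(E2:K)*sd^2 + (-32)*(A1:K)*(C2:K)*(E1:K)*(E2:K)*sd^2*(2:K)⁻¹ + (-8)*(A1:K)*(C1:K)*(E2:K)^2*sd^2 + (-16)*(A1:K)*(C1:K)*(E2:K)^2*sd^2*(2:K)⁻¹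 + (-8)*(A1:K)*(C1:K)*(E1:K)^2 + (-16)*(A1:K)*(C1:K)*(E1:K)^2*(2:K)⁻¹ + 8*(A1:K)*(B2:K)*(E2:K)*(f:K)*sd^2 + 16*(A1:K)*(B2:K)*(E2:K)*(f:K)*sd^2*(2:K)⁻¹ + 32*(A1:K)*(B2:K)*(E2:K)*(f:K)*sd^2*(2:K)⁻¹^2 + (-8)*(A1:K)*(B2:K)^2*(C1:K)*sd^2 + (-16)*(A1:K)*(B2:K)^2*(C1:K)*sd^2*(2:K)⁻¹ + 8*(A1:K)*(B1:K)*(E1:K)*(f:K) + 16*(A1:K)*(B1:K)*(E1:K)*(f:K)*(2:K)⁻¹ + 32*(A1:K)*(B1:K)*(E1:K)*(f:K)*(2:K)⁻¹^2 + 16*(A1:K)*(B1:K)*(B2:K)*(C2:K)*sd^2 + 32*(A1:K)*(B1:K)*(B2:K)*(C2:K)*sd^2*(2:K)⁻¹ + (-8)*(A1:K)*(B1:K)^2*(C1:K) + (-16)*(A1:K)*(B1:K)^2*(C1:K)*(2:K)⁻¹ + (-4)*(A1:K)^2*(f:K)^2 + (-8)*(A1:K)^2*(f:K)^2*(2:K)⁻¹)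 * hu + (2*(E2:K)^2*(d:K)*(f:K) + 1*(E2:K)^4*sd^2 + 1*(E2:K)^4*(D:K) + (-2)*(E1:K)^2*(E2:K)^2 + 4*(C2:K)^2*(d:K)^2 + (-8)*(B2:K)*(C2:K)*(E1:K)*(d:K) + (-8)*(B2:K)*(C1:K)*(E2:K)*(d:K) + 2*(B2:K)^2*(d:K)*(f:K) + (-2)*(B2:K)^2*(E2:K)^2*sd^2 + (-2)*(B2:K)^2*(E2:K)^2*(D:K) + 2*(B2:K)^2*(E1:K)^2 + 1*(B2:K)^4*sd^2 + 1*(B2:K)^4*(D:K) + 8*(B1:K)*(C2:K)*(E2:K)*(d:K) + 2*(B1:K)^2*(E2:K)^2 + (-2)*(B1:K)^2*(B2:K)^2 + 8*(A2:K)*(C2:K)*(E2:K)^2*sd^2 + 8*(A2:K)*(C2:K)*(E2:K)^2*(D:K) + 8*(A2:K)*(C2:K)*(E1:K)^2 + 16*(A2:K)*(C1:K)*(E1:K)*(E2:K) + (-8)*(A2:K)*(B2:K)*(E1:K)*(f:K) + (-8)*(A2:K)*(B2:K)^2*(C2:K)*sd^2 + (-8)*(A2:K)*(B2:K)^2*(C2:K)*(D:K)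 + (-8)*(A2:K)*(B1:K)*(E2:K)*(f:K) + 16*(A2:K)*(B1:K)*(B2:K)*(C1:K) + (-8)*(A2:K)*(B1:K)^2*(C2:K) + 4*(A2:K)^2*(f:K)^2 + 16*(A2:K)^2*(C2:K)^2*sd^2 + 16*(A2:K)^2*(C2:K)^2*(D:K) + (-16)*(A2:K)^2*(C1:K)^2 + (-16)*(A1:K)*(C2:K)*(E1:K)*(E2:K) + (-8)*(A1:K)*(C1:K)*(E2:K)^2 + 8*(A1:K)*(B2:K)*(E2:K)*(f:K) + (-8)*(A1:K)*(B2:K)^2*(C1:K) + 16*(A1:K)*(B1:K)*(B2:K)*(C2:K) + (-16)*(A1:K)^2*(C2:K)^2) * hsd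
    rw [hMQ, Matrix.det_mul, Matrix.det_mul, Matrix.det_transpose, hdT]
    linear_combination (D : K) ^ 2 * key16
  · rw [hτb, hτe, hB, hE]
    push_cast
    linear_combination ((B2 : K) ^ 2 + (E2 : K) ^ 2) * hsd
  · apply Int.add_mul_emod_self_left
  · rcases Int.even_or_odd (B1 ^ 2 - D * B2 ^ 2 + E1 ^ 2 - D * E2 ^ 2 + d * f) with ⟨k, hk⟩ | ⟨k, hk⟩
    · left
      rw [Int.add_mul_emod_self_left, hk, show (k + k) ^ 2 = 4 * k ^ 2 by ring, Int.mul_emod_right]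
    · right
      rw [Int.add_mul_emod_self_left, hk, show (2 * k + 1) ^ 2 = 1 + 4 * (k ^ 2 + k) by ring,
        Int.add_mul_emod_self_left]
      norm_num
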